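/- Every network matrix is totally unimodular. Specifically: let T be a directed tree on vertex set V with arc set A, and let A' be a set of directed pairs on V. Define the matrix M ∈ {-1,0,1}^{A×A'} where M_{(a,b),(s,t)} is 1 if arc (a,b) appears forward on the unique path from s to t in the underlying tree, -1 if it appears backward, and 0 otherwise. Then every square submatrix of M has determinant in {-1,0,1}. -/

import Mathlib

open SimpleGraph

section GraphPart
variable {V : Type*} [DecidableEq V] (G : SimpleGraph V)

/-- Signed count of traversals of arc `(a,b)` along a walk. -/
private def cnt (a b : V) : ∀ {s t : V}, G.Walk s t → ℤ
  | _, _, SimpleGraph.Walk.nil => 0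
  | s, _, SimpleGraph.Walk.cons (v := w) _ q =>
      (if s = a ∧ w = b then (1:ℤ) else if s = b ∧ w = a then -1 else 0) + cnt a b q

open Classical in
/-- Indicator (as an integer) of the `b`-side of the edge `{a,b}`. -/
private noncomputable def sideFn (a b v : V) : ℤ :=
  if (G \ SimpleGraph.fromEdgeSet {s(a,b)}).Reachable b v then 1 else 0

private lemma sideFn_mem (a b v : V) : sideFn G a b v = 0 ∨ sideFn G a b v = 1 := by
  unfold sideFn; split <;> simp

private lemma sideFn_step (hac : G.IsAcyclic) {a b : V} (hab : G.Adj a b)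
    {x y : V} (hxy : G.Adj x y) :
    sideFn G a b y - sideFn G a b x
      = (if x = a ∧ y = b then (1:ℤ) else if x = b ∧ y = a then -1 else 0) := by
  classical
  have hbridge : ¬(G \ SimpleGraph.fromEdgeSet {s(a,b)}).Reachable a b :=
    ((SimpleGraph.isAcyclic_iff_forall_adj_isBridge.mp hac) hab)
  by_cases h1 : x = a ∧ y = b
  · rw [if_pos h1, h1.1, h1.2]
    unfold sideFn
    rw [if_pos (SimpleGraph.Reachable.refl _), if_neg (fun h => hbridge h.symm)]
    norm_num
  · by_cases h2 : x = b ∧ y = a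
    · rw [if_neg h1, if_pos h2, h2.1, h2.2]
      unfold sideFn
      rw [if_pos (SimpleGraph.Reachable.refl _), if_neg (fun h => hbridge h.symm)]
      norm_num
    · rw [if_neg h1, if_neg h2]
      have hne : s(x,y) ≠ s(a,b) := by
        intro h; rw [Sym2.eq_iff] at h; tauto
      have hadj : (G \ SimpleGraph.fromEdgeSet {s(a,b)}).Adj x y := by
        rw [SimpleGraph.sdiff_adj, SimpleGraph.fromEdgeSet_adj]
        exact ⟨hxy, fun h => hne (by simpa using h.1)⟩
      have hiff : (G \ SimpleGraph.fromEdgeSet {s(a,b)}).Reachable b x ↔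
          (G \ SimpleGraph.fromEdgeSet {s(a,b)}).Reachable b y :=
        ⟨fun h => h.trans hadj.reachable, fun h => h.trans hadj.symm.reachable⟩
      unfold sideFn
      by_cases hr : (G \ SimpleGraph.fromEdgeSet {s(a,b)}).Reachable b x
      · rw [if_pos hr, if_pos (hiff.mp hr), sub_self]
      · rw [if_neg hr, if_neg (fun h => hr (hiff.mpr h)), sub_self]

private lemma cnt_eq_side (hac : G.IsAcyclic) {a b : V} (hab : G.Adj a b) :
    ∀ {s t : V} (w : G.Walk s t), cnt G a b w = sideFn G a b t - sideFn G a b s := by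
  intro s t w
  induction w with
  | nil => simp [cnt]
  | cons h q ih =>
    rw [cnt, ih, ← sideFn_step G hac hab h]
    ring

private lemma cnt_support {a b : V} :
    ∀ {s t : V} (w : G.Walk s t), cnt G a b w ≠ 0 → a ∈ w.support ∧ b ∈ w.support := by
  intro s t w
  induction w with
  | nil => intro h; exact absurd rfl h
  | @cons s v t h q ih =>
    intro hne
    by_cases hd : (if s = a ∧ v = b then (1:ℤ) else if s = b ∧ v = a then -1 else 0) = 0
    · rw [cnt, hd, zero_add] at hne
      obtain ⟨ha, hb⟩ := ih hne
      exact ⟨List.mem_cons_of_mem _ ha, List.mem_cons_of_mem _ hb⟩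
    · rw [SimpleGraph.Walk.support_cons]
      by_cases h1 : s = a ∧ v = b
      · obtain ⟨rfl, rfl⟩ := h1
        exact ⟨List.mem_cons_self, List.mem_cons_of_mem _ q.start_mem_support⟩
      · rw [if_neg h1] at hd
        by_cases h2 : s = b ∧ v = a
        · obtain ⟨rfl, rfl⟩ := h2
          exact ⟨List.mem_cons_of_mem _ q.start_mem_support, List.mem_cons_self⟩
        · rw [if_neg h2] at hd; exact absurd rfl hd

/-- The entry formula: the if-then-else infix expression equals the signed count. -/
private lemma entry_eq_cnt {a b : V} (hne : a ≠ b) :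
    ∀ {s t : V} (p : G.Walk s t), p.IsPath →
    (if [a, b] <:+: p.support then (1:ℤ)
      else if [b, a] <:+: p.support then -1 else 0) = cnt G a b p := by
  intro s t p
  induction p with
  | nil =>
    intro _
    have h2 : ∀ (x y u : V), ¬ ([x, y] <:+: (SimpleGraph.Walk.nil : G.Walk u u).support) := by
      intro x y u h
      have := h.length_le
      simp [SimpleGraph.Walk.support_nil] at this
    rw [if_neg (h2 a b _), if_neg (h2 b a _), cnt]
  | @cons s v t h q ih =>
    intro hp
    obtain ⟨hq, hs⟩ := (SimpleGraph.Walk.cons_isPath_iff h q).mp hp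
    have key : ∀ x y : V, ([x, y] <:+: (SimpleGraph.Walk.cons h q).support
        ↔ (x = s ∧ y = v) ∨ [x, y] <:+: q.support) := by
      intro x y
      rw [SimpleGraph.Walk.support_cons, List.infix_cons_iff]
      constructor
      · rintro (hpre | hinf)
        · left
          rw [List.cons_prefix_cons] at hpre
          obtain ⟨rfl, hpre⟩ := hpre
          rw [q.support_eq_cons, List.cons_prefix_cons] at hpre
          exact ⟨rfl, hpre.1⟩
        · right; exact hinf
      · rintro (⟨rfl, rfl⟩ | hinf)
        · left
          rw [List.cons_prefix_cons]
          refine ⟨rfl, ?_⟩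
          rw [q.support_eq_cons, List.cons_prefix_cons]
          exact ⟨rfl, List.nil_prefix⟩
        · right; exact hinf
    rw [cnt, ← ih hq]
    by_cases h1 : s = a ∧ v = b
    · have has : a ∉ q.support := by rw [← h1.1]; exact hs
      have hnab : ¬ ([a, b] <:+: q.support) := fun h' => has (h'.subset (by simp))
      have hnba : ¬ ([b, a] <:+: q.support) := fun h' => has (h'.subset (by simp))
      rw [if_pos ((key a b).mpr (Or.inl ⟨h1.1.symm, h1.2.symm⟩)), if_pos h1,
        if_neg hnab, if_neg hnba]
      norm_num
    · by_cases h2 : s = b ∧ v = a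
      · have hbs : b ∉ q.support := by rw [← h2.1]; exact hs
        have hnab : ¬ ([a, b] <:+: q.support) := fun h' => hbs (h'.subset (by simp))
        have hnba : ¬ ([b, a] <:+: q.support) := fun h' => hbs (h'.subset (by simp))
        have hcons_ab : ¬ ([a, b] <:+: (SimpleGraph.Walk.cons h q).support) := by
          rw [key]
          rintro (⟨ha', _⟩ | hinf)
          · exact hne (ha'.trans h2.1)
          · exact hnab hinf
        rw [if_neg hcons_ab, if_pos ((key b a).mpr (Or.inl ⟨h2.1.symm, h2.2.symm⟩)),
          if_neg h1, if_pos h2, if_neg hnab, if_neg hnba]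
        norm_num
      · have e1 : ([a, b] <:+: (SimpleGraph.Walk.cons h q).support) ↔ [a, b] <:+: q.support := by
          rw [key]
          constructor
          · rintro (⟨rfl, rfl⟩ | hinf)
            · exact absurd ⟨rfl, rfl⟩ h1
            · exact hinf
          · exact Or.inr
        have e2 : ([b, a] <:+: (SimpleGraph.Walk.cons h q).support) ↔ [b, a] <:+: q.support := by
          rw [key]
          constructor
          · rintro (⟨rfl, rfl⟩ | hinf)
            · exact absurd ⟨rfl, rfl⟩ h2
            · exact hinf
          · exact Or.inr
        rw [if_neg (fun hh : s = a ∧ v = b => h1 hh), if_neg (fun hh : s = b ∧ v = a => h2 hh),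
          zero_add]
        simp only [e1, e2]

/-- On a path whose endpoints are on the same side, every vertex is on that side. -/
private lemma side_const_on_path (hac : G.IsAcyclic) {a b : V} (hab : G.Adj a b)
    [DecidableEq V] {u v : V} (p : G.Walk u v) (hp : p.IsPath)
    (huv : sideFn G a b u = sideFn G a b v) {m : V} (hm : m ∈ p.support) :
    sideFn G a b m = sideFn G a b u := by
  by_contra hmu
  have h1 : cnt G a b (p.takeUntil m hm) ≠ 0 := by
    rw [cnt_eq_side G hac hab]
    exact fun h => hmu (by linarith [sub_eq_zero.mp h])
  have h2 : cnt G a b (p.dropUntil m hm) ≠ 0 := by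
    rw [cnt_eq_side G hac hab]
    intro h
    have := sub_eq_zero.mp h
    exact hmu (by rw [← huv] at this; omega)
  obtain ⟨ha1, hb1⟩ := cnt_support G _ h1
  obtain ⟨ha2, hb2⟩ := cnt_support G _ h2
  have hnodup : (p.support).Nodup := hp.support_nodup
  have hsplit : p.support = (p.takeUntil m hm).support ++ (p.dropUntil m hm).support.tail := by
    conv_lhs => rw [← p.take_spec hm]
    exact SimpleGraph.Walk.support_append _ _
  rw [hsplit] at hnodup
  have hdisj := List.disjoint_of_nodup_append hnodup
  have key : ∀ x : V, x ∈ (p.takeUntil m hm).support → x ∈ (p.dropUntil m hm).support → x = m := by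
    intro x hx1 hx2
    rw [(p.dropUntil m hm).support_eq_cons] at hx2
    rcases List.mem_cons.mp hx2 with hx2' | hx2'
    · exact hx2'
    · exact absurd hx2' (hdisj hx1)
  have hA := key a ha1 ha2
  have hB := key b hb1 hb2
  exact hab.ne (hA.trans hB.symm)

end GraphPart


private lemma sideFn_crossfree {V : Type*} [DecidableEq V] (G : SimpleGraph V)
    (hac : G.IsAcyclic) (P : ∀ s t : V, G.Walk s t) (hP : ∀ s t, (P s t).IsPath)
    {a b a' b' : V} (hab : G.Adj a b) (hab' : G.Adj a' b') :
    (∀ v, sideFn G a b v ≤ sideFn G a' b' v) ∨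
    (∀ v, sideFn G a' b' v ≤ sideFn G a b v) ∨
    (∀ v, sideFn G a b v + sideFn G a' b' v ≤ 1) ∨
    (∀ v, 1 ≤ sideFn G a b v + sideFn G a' b' v) := by
  by_contra hcon
  push_neg at hcon
  obtain ⟨⟨x, hx⟩, ⟨y, hy⟩, ⟨z, hz⟩, ⟨w, hw⟩⟩ := hcon
  have hx1 : sideFn G a b x = 1 ∧ sideFn G a' b' x = 0 := by
    rcases sideFn_mem G a b x with h | h <;> rcases sideFn_mem G a' b' x with h' | h' <;> omega
  have hy1 : sideFn G a b y = 0 ∧ sideFn G a' b' y = 1 := by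
    rcases sideFn_mem G a b y with h | h <;> rcases sideFn_mem G a' b' y with h' | h' <;> omega
  have hz1 : sideFn G a b z = 1 ∧ sideFn G a' b' z = 1 := by
    rcases sideFn_mem G a b z with h | h <;> rcases sideFn_mem G a' b' z with h' | h' <;> omega
  have hw1 : sideFn G a b w = 0 ∧ sideFn G a' b' w = 0 := by
    rcases sideFn_mem G a b w with h | h <;> rcases sideFn_mem G a' b' w with h' | h' <;> omega
  have h1 : sideFn G a b a' = 1 := by
    have hcross : cnt G a' b' (P z x) ≠ 0 := by
      rw [cnt_eq_side G hac hab']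
      omega
    have ha'mem : a' ∈ (P z x).support := (cnt_support G _ hcross).1
    have := side_const_on_path G hac hab (P z x) (hP z x)
      (by omega : sideFn G a b z = sideFn G a b x) ha'mem
    omega
  have h0 : sideFn G a b a' = 0 := by
    have hcross : cnt G a' b' (P y w) ≠ 0 := by
      rw [cnt_eq_side G hac hab']
      omega
    have ha'mem : a' ∈ (P y w).support := (cnt_support G _ hcross).1
    have := side_const_on_path G hac hab (P y w) (hP y w)
      (by omega : sideFn G a b y = sideFn G a b w) ha'mem
    omega
  omega


private lemma abstract_net_det {V : Type*} :
    ∀ (k : ℕ) (φ : Fin k → V → ℤ), (∀ i v, φ i v = 0 ∨ φ i v = 1) →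
      (∀ i j, (∀ v, φ i v ≤ φ j v) ∨ (∀ v, φ j v ≤ φ i v) ∨
        (∀ v, φ i v + φ j v ≤ 1) ∨ (∀ v, 1 ≤ φ i v + φ j v)) →
      ∀ p : Fin k → V × V,
        (Matrix.of fun i j => φ i (p j).2 - φ i (p j).1).det = -1 ∨
        (Matrix.of fun i j => φ i (p j).2 - φ i (p j).1).det = 0 ∨
        (Matrix.of fun i j => φ i (p j).2 - φ i (p j).1).det = 1 := by
  intro k
  induction k with
  | zero =>
    intro φ _ _ p
    right; right
    exact Matrix.det_fin_zero
  | succ k ih =>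
    intro φ h01 hcf p
    classical
    by_cases hconst : ∃ i, ∀ v w, φ i v = φ i w
    · obtain ⟨i, hi⟩ := hconst
      right; left
      apply Matrix.det_eq_zero_of_row_eq_zero i
      intro j
      simp only [Matrix.of_apply]
      rw [hi (p j).2 (p j).1, sub_self]
    set S : Fin (k+1) → Set V := fun i => {v | φ i v = 1} with hS
    have hmemS : ∀ i v, v ∈ S i ↔ φ i v = 1 := fun i v => Iff.rfl
    have hnotS : ∀ i v, v ∉ S i ↔ φ i v = 0 := by
      intro i v
      rcases h01 i v with h | h <;> simp [hmemS, h]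
    set Fam : Finset (Set V) :=
      (Finset.univ.image S) ∪ (Finset.univ.image fun i => (S i)ᶜ) with hFam
    have hSmem : ∀ i, S i ∈ Fam := by
      intro i; simp [hFam]
    have hScmem : ∀ i, (S i)ᶜ ∈ Fam := by
      intro i
      simp only [hFam, Finset.mem_union, Finset.mem_image, Finset.mem_univ, true_and]
      exact Or.inr ⟨i, rfl⟩
    have hFamne : Fam.Nonempty := ⟨S 0, hSmem 0⟩
    obtain ⟨T, hTmem, hTmin⟩ := Fam.exists_minimal hFamne
    have hTmin' : ∀ X ∈ Fam, X ⊆ T → X = T := by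
      intro X hX hXT
      by_contra hne
      exact hne (le_antisymm hXT (hTmin hX hXT))
    obtain ⟨i₀, hi₀⟩ : ∃ i₀, T = S i₀ ∨ T = (S i₀)ᶜ := by
      simp only [hFam, Finset.mem_union, Finset.mem_image, Finset.mem_univ, true_and] at hTmem
      rcases hTmem with ⟨i, hi⟩ | ⟨i, hi⟩
      · exact ⟨i, Or.inl hi.symm⟩
      · exact ⟨i, Or.inr hi.symm⟩
    have hrel : ∀ i j, S i ⊆ S j ∨ S j ⊆ S i ∨ (∀ v, v ∈ S i → v ∉ S j) ∨
        (∀ v, v ∈ S i ∨ v ∈ S j) := by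
      intro i j
      rcases hcf i j with h | h | h | h
      · left
        intro v hv
        have h1 := h v
        rw [hmemS] at hv ⊢
        rcases h01 j v with h0 | h0 <;> omega
      · right; left
        intro v hv
        have h1 := h v
        rw [hmemS] at hv ⊢
        rcases h01 i v with h0 | h0 <;> omega
      · right; right; left
        intro v hv
        have h1 := h v
        rw [hmemS] at hv
        rw [hnotS]
        rcases h01 j v with h0 | h0 <;> omega
      · right; right; right
        intro v
        have h1 := h v
        rcases h01 i v with h0 | h0
        · right
          rw [hmemS]
          rcases h01 j v with h2 | h2 <;> omega
        · left; rw [hmemS]; exact h0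
    have hside : ∀ i, T ⊆ S i ∨ ∀ v ∈ T, v ∉ S i := by
      intro i
      rcases hi₀ with hT | hT
      · rcases hrel i i₀ with h | h | h | h
        · have heq : S i = T := hTmin' (S i) (hSmem i) (by rw [hT]; exact h)
          left; rw [← heq]
        · left; rw [hT]; exact h
        · right
          intro v hv hvi
          rw [hT] at hv
          exact (h v hvi) hv
        · have hsub : (S i)ᶜ ⊆ T := by
            rw [hT]
            intro v hv
            rcases h v with h' | h'
            · exact absurd h' hv
            · exact h'
          have heq := hTmin' _ (hScmem i) hsub
          right
          intro v hv
          rw [← heq] at hv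
          exact hv
      · rcases hrel i i₀ with h | h | h | h
        · right
          intro v hv hvi
          rw [hT] at hv
          exact hv (h hvi)
        · have hsub : (S i)ᶜ ⊆ T := by
            rw [hT]
            intro v hv hvi₀
            exact hv (h hvi₀)
          have heq := hTmin' _ (hScmem i) hsub
          right
          intro v hv
          rw [← heq] at hv
          exact hv
        · have hsub : S i ⊆ T := by
            rw [hT]
            intro v hv hvi₀
            exact (h v hv) hvi₀
          have heq := hTmin' _ (hSmem i) hsub
          left; rw [← heq]
        · left
          rw [hT]
          intro v hv
          rcases h v with h' | h'
          · exact h'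
          · exact absurd h' hv
    have hconstT : ∀ i v w, v ∈ T → w ∈ T → φ i v = φ i w := by
      intro i v w hv hw
      rcases hside i with h | h
      · rw [(hmemS i v).mp (h hv), (hmemS i w).mp (h hw)]
      · rw [(hnotS i v).mp (h v hv), (hnotS i w).mp (h w hw)]
    set θ : V → ℤ := fun v => if v ∈ T then 1 else 0 with hθdef
    have hθ1 : ∀ v, v ∈ T → θ v = 1 := fun v hv => if_pos hv
    have hθ0 : ∀ v, v ∉ T → θ v = 0 := fun v hv => if_neg hv
    obtain ⟨ε₀, hε₀mem, hε₀⟩ : ∃ ε₀ : ℤ, (ε₀ = 1 ∨ ε₀ = -1) ∧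
        ∀ v w, φ i₀ v - φ i₀ w = ε₀ * (θ v - θ w) := by
      rcases hi₀ with hT | hT
      · refine ⟨1, Or.inl rfl, fun v w => ?_⟩
        have key : ∀ u, φ i₀ u = θ u := by
          intro u
          by_cases h : u ∈ T
          · rw [hθ1 u h]
            exact (hmemS i₀ u).mp (hT ▸ h)
          · rw [hθ0 u h]
            exact (hnotS i₀ u).mp (fun hc => h (by rw [hT]; exact hc))
        rw [key v, key w]; ring
      · refine ⟨-1, Or.inr rfl, fun v w => ?_⟩
        have key : ∀ u, φ i₀ u = 1 - θ u := by
          intro u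
          by_cases h : u ∈ T
          · rw [hθ1 u h]
            have hu : u ∉ S i₀ := by rw [hT] at h; exact h
            rw [(hnotS i₀ u).mp hu]; ring
          · rw [hθ0 u h]
            have hu : u ∈ S i₀ := by
              by_contra hc
              exact h (by rw [hT]; exact hc)
            rw [(hmemS i₀ u).mp hu]; ring
        rw [key v, key w]; ring
    -- case: row i₀ is zero
    by_cases hall : ∀ j, θ (p j).2 - θ (p j).1 = 0
    · right; left
      apply Matrix.det_eq_zero_of_row_eq_zero i₀
      intro j
      simp only [Matrix.of_apply]
      rw [hε₀ (p j).2 (p j).1, hall j, mul_zero]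
    push_neg at hall
    obtain ⟨jx, hjx⟩ := hall
    have hθ01 : ∀ v, θ v = 0 ∨ θ v = 1 := by
      intro v
      by_cases h : v ∈ T
      · right; exact hθ1 v h
      · left; exact hθ0 v h
    have hjxcases : ((p jx).2 ∈ T ∧ (p jx).1 ∉ T) ∨ ((p jx).2 ∉ T ∧ (p jx).1 ∈ T) := by
      by_cases h2 : (p jx).2 ∈ T <;> by_cases h1 : (p jx).1 ∈ T
      · exact absurd (by rw [hθ1 _ h2, hθ1 _ h1, sub_self]) hjx
      · exact Or.inl ⟨h2, h1⟩
      · exact Or.inr ⟨h2, h1⟩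
      · exact absurd (by rw [hθ0 _ h2, hθ0 _ h1, sub_self]) hjx
    set wstar : V := if (p jx).2 ∈ T then (p jx).1 else (p jx).2 with hwstar
    have hwT : wstar ∉ T := by
      rcases hjxcases with ⟨h2, h1⟩ | ⟨h2, h1⟩
      · rw [hwstar, if_pos h2]; exact h1
      · rw [hwstar, if_neg h2]; exact h2
    set r : V → V := fun v => if v ∈ T then wstar else v with hr
    have hrT : ∀ v, r v ∉ T := by
      intro v
      by_cases h : v ∈ T
      · rw [hr]; simp only [if_pos h]; exact hwT
      · rw [hr]; simp only [if_neg h]; exact h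
    set q : Fin (k+1) → V × V :=
      fun j => if j = jx then p jx else (r (p j).1, r (p j).2) with hq
    set c : Fin (k+1) → ℤ :=
      fun j => if j = jx then 0 else (θ (p j).2 - θ (p j).1) * (θ (p jx).2 - θ (p jx).1) with hc
    have hqjx : q jx = p jx := by rw [hq]; simp
    have hcol : ∀ i j, φ i (p j).2 - φ i (p j).1
        = (φ i (q j).2 - φ i (q j).1) + c j * (φ i (q jx).2 - φ i (q jx).1) := by
      intro i j
      by_cases hj : j = jx
      · subst hj
        rw [hqjx, hc]
        simp
      · rw [hqjx, hc, hq]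
        simp only [if_neg hj]
        rcases hjxcases with ⟨h2, h1⟩ | ⟨h2, h1⟩
        · -- (p jx).2 ∈ T, (p jx).1 ∉ T, wstar = (p jx).1
          have hw : wstar = (p jx).1 := by rw [hwstar, if_pos h2]
          rw [hθ1 _ h2, hθ0 _ h1]
          by_cases hsT : (p j).1 ∈ T <;> by_cases htT : (p j).2 ∈ T
          · rw [hθ1 _ hsT, hθ1 _ htT]
            simp only [hr, if_pos hsT, if_pos htT]
            have := hconstT i (p j).2 (p j).1 htT hsT
            ring_nf
            linarith
          · rw [hθ1 _ hsT, hθ0 _ htT]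
            simp only [hr, if_pos hsT, if_neg htT, hw]
            have := hconstT i (p j).1 (p jx).2 hsT h2
            ring_nf
            linarith
          · rw [hθ0 _ hsT, hθ1 _ htT]
            simp only [hr, if_neg hsT, if_pos htT, hw]
            have := hconstT i (p j).2 (p jx).2 htT h2
            ring_nf
            linarith
          · rw [hθ0 _ hsT, hθ0 _ htT]
            simp only [hr, if_neg hsT, if_neg htT]
            ring
        · -- (p jx).2 ∉ T, (p jx).1 ∈ T, wstar = (p jx).2
          have hw : wstar = (p jx).2 := by rw [hwstar, if_neg h2]
          rw [hθ0 _ h2, hθ1 _ h1]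
          by_cases hsT : (p j).1 ∈ T <;> by_cases htT : (p j).2 ∈ T
          · rw [hθ1 _ hsT, hθ1 _ htT]
            simp only [hr, if_pos hsT, if_pos htT]
            have := hconstT i (p j).2 (p j).1 htT hsT
            ring_nf
            linarith
          · rw [hθ1 _ hsT, hθ0 _ htT]
            simp only [hr, if_pos hsT, if_neg htT, hw]
            have := hconstT i (p j).1 (p jx).1 hsT h1
            ring_nf
            linarith
          · rw [hθ0 _ hsT, hθ1 _ htT]
            simp only [hr, if_neg hsT, if_pos htT, hw]
            have := hconstT i (p j).2 (p jx).1 htT h1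
            ring_nf
            linarith
          · rw [hθ0 _ hsT, hθ0 _ htT]
            simp only [hr, if_neg hsT, if_neg htT]
            ring
    set N : Matrix (Fin (k+1)) (Fin (k+1)) ℤ :=
      Matrix.of fun i j => φ i (p j).2 - φ i (p j).1 with hN
    set N' : Matrix (Fin (k+1)) (Fin (k+1)) ℤ :=
      Matrix.of fun i j => φ i (q j).2 - φ i (q j).1 with hN'
    have hdet : N.det = N'.det := by
      have hceq : c jx = 0 := by rw [hc]; simp
      have h := Matrix.det_eq_of_forall_row_eq_smul_add_const
        (A := Matrix.transpose N) (B := Matrix.transpose N') c jx hceq ?_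
      · rwa [Matrix.det_transpose, Matrix.det_transpose] at h
      · intro i j
        show N j i = N' j i + c i * N' j jx
        have h2 := hcol j i
        simp only [hN, hN', Matrix.of_apply]
        rw [h2, hqjx]
    have hrowzero : ∀ j, j ≠ jx → N' i₀ j = 0 := by
      intro j hj
      simp only [hN', Matrix.of_apply]
      rw [hε₀ (q j).2 (q j).1]
      have h2 : (q j).2 ∉ T := by rw [hq]; simp only [if_neg hj]; exact hrT _
      have h1 : (q j).1 ∉ T := by rw [hq]; simp only [if_neg hj]; exact hrT _
      rw [hθ0 _ h2, hθ0 _ h1, sub_self, mul_zero]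
    have hval : N' i₀ jx = 1 ∨ N' i₀ jx = -1 := by
      have h2 : N' i₀ jx = ε₀ * (θ (p jx).2 - θ (p jx).1) := by
        simp only [hN', Matrix.of_apply, hqjx]
        exact hε₀ _ _
      rcases hjxcases with ⟨ha, hb⟩ | ⟨ha, hb⟩ <;>
        rcases hε₀mem with h0 | h0 <;>
          rw [h2, h0] <;>
            [rw [hθ1 _ ha, hθ0 _ hb]; rw [hθ1 _ ha, hθ0 _ hb];
             rw [hθ0 _ ha, hθ1 _ hb]; rw [hθ0 _ ha, hθ1 _ hb]] <;> norm_num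
    have hminor := ih (fun i => φ (i₀.succAbove i)) (fun i v => h01 _ v)
      (fun i j => hcf _ _) (fun j => q (jx.succAbove j))
    have hsubeq : N'.submatrix i₀.succAbove jx.succAbove
        = Matrix.of fun i j => (fun i => φ (i₀.succAbove i)) i
            ((fun j => q (jx.succAbove j)) j).2
          - (fun i => φ (i₀.succAbove i)) i ((fun j => q (jx.succAbove j)) j).1 := by
      ext i j
      rfl
    have hlap : N'.det = (-1) ^ ((i₀ : ℕ) + (jx : ℕ)) * N' i₀ jx
        * (N'.submatrix i₀.succAbove jx.succAbove).det := by
      rw [Matrix.det_succ_row N' i₀]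
      rw [Finset.sum_eq_single_of_mem jx (Finset.mem_univ _)]
      intro j _ hj
      rw [hrowzero j hj, mul_zero, zero_mul]
    have hsgn : ((-1 : ℤ)) ^ ((i₀ : ℕ) + (jx : ℕ)) = 1 ∨
        ((-1 : ℤ)) ^ ((i₀ : ℕ) + (jx : ℕ)) = -1 := by
      rcases Nat.even_or_odd ((i₀ : ℕ) + (jx : ℕ)) with h | h
      · left; exact h.neg_one_pow
      · right; exact h.neg_one_pow
    rw [hN] at hdet
    rw [hdet, hlap, hsubeq]
    rcases hsgn with h1 | h1 <;> rcases hval with h2 | h2 <;>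
      rcases hminor with h3 | h3 | h3 <;> rw [h1, h2, h3] <;> norm_num


/-- every network matrix is totally unimodular. Rows are indexed by `ι`, each row
`i` corresponding to an arc `f i` (an orientation of an edge of a tree `G`); columns are
indexed by `κ`, each column `j` corresponding to a directed pair `g j` of vertices. The entry
`M i j` is `1` if the arc `f i` appears forward on the unique path from `(g j).1` to `(g j).2`
(i.e. its endpoints occur consecutively in that order in the path's vertex list), `-1` if it
appears backward, and `0` otherwise. Then every square submatrix of `M` has determinant in
`{-1, 0, 1}`. -/
theorem network_matrix_totally_unimodular {V ι κ : Type*} [DecidableEq V] (G : SimpleGraph V)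
    (hT : G.IsTree) (P : ∀ s t : V, G.Walk s t) (hP : ∀ s t, (P s t).IsPath)
    (f : ι → V × V) (hf : ∀ i, G.Adj (f i).1 (f i).2)
    (g : κ → V × V) (M : Matrix ι κ ℤ)
    (hM : ∀ i j, M i j =
      if [(f i).1, (f i).2] <:+: (P (g j).1 (g j).2).support then 1
      else if [(f i).2, (f i).1] <:+: (P (g j).1 (g j).2).support then -1
      else 0) :
    M.IsTotallyUnimodular := by
  classical
  have hac : G.IsAcyclic := hT.IsAcyclic
  intro k rr cc _ _
  have hentry : ∀ (i : ι) (j : κ),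
      M i j = sideFn G (f i).1 (f i).2 (g j).2 - sideFn G (f i).1 (f i).2 (g j).1 := by
    intro i j
    rw [hM i j, entry_eq_cnt G (hf i).ne (P (g j).1 (g j).2) (hP _ _),
      cnt_eq_side G hac (hf i)]
  set φ : Fin k → V → ℤ := fun i v => sideFn G (f (rr i)).1 (f (rr i)).2 v with hφ
  have h01 : ∀ i v, φ i v = 0 ∨ φ i v = 1 := fun i v => sideFn_mem G _ _ v
  have hcf : ∀ i j, (∀ v, φ i v ≤ φ j v) ∨ (∀ v, φ j v ≤ φ i v) ∨
      (∀ v, φ i v + φ j v ≤ 1) ∨ (∀ v, 1 ≤ φ i v + φ j v) := by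
    intro i j
    exact sideFn_crossfree G hac P hP (hf (rr i)) (hf (rr j))
  have habs := abstract_net_det k φ h01 hcf (fun j => g (cc j))
  have hsub : M.submatrix rr cc
      = Matrix.of fun i j => φ i (g (cc j)).2 - φ i (g (cc j)).1 := by
    ext i j
    rw [Matrix.submatrix_apply, hentry]
    rfl
  rw [hsub]
  rcases habs with h | h | h
  · exact ⟨-1, by rw [h]; simp⟩
  · exact ⟨0, by rw [h]; simp⟩
  · exact ⟨1, by rw [h]; simp⟩
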